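/- arXiv:1407.2673 — 3 statements merged into one kernel-verified Lean document; each statement's English description precedes it below -/
import Mathlib

section
/- Let X be a topological space which is a finite disjoint union of locally closed subsets Y_1, …, Y_m. Then for every irreducible component C of X there exists an index i and an irreducible component D of Y_i such that C equals the closure of D in X; in particular C ∩ Y_i is dense in C. -/
/-- Preimage under the subtype inclusion of a set whose trace is preirreducible is
preirreducible. -/
lemma isPreirreducible_preimage_val {X : Type*} [TopologicalSpace X] {s t : Set X}
    (h : IsPreirreducible (t ∩ s)) :
    IsPreirreducible ((Subtype.val : s → X) ⁻¹' t) := by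
  rintro U V hU hV ⟨⟨x, hxs⟩, hxt, hxU⟩ ⟨⟨y, hys⟩, hyt, hyV⟩
  obtain ⟨U', hU', rfl⟩ := isOpen_induced_iff.mp hU
  obtain ⟨V', hV', rfl⟩ := isOpen_induced_iff.mp hV
  obtain ⟨z, ⟨hzt, hzs⟩, hzU, hzV⟩ :=
    h U' V' hU' hV' ⟨x, ⟨hxt, hxs⟩, hxU⟩ ⟨y, ⟨hyt, hys⟩, hyV⟩
  exact ⟨⟨z, hzs⟩, hzt, hzU, hzV⟩

/-- If a topological space `X` with finitely many irreducible components is the finite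
disjoint union of locally closed subsets `Y i`, then every irreducible component `C` of `X`
is the closure of an irreducible component `D` of some `Y i`; in particular `C ∩ Y i` is
dense in `C`. -/
theorem irreducibleComponent_eq_closure_of_locallyClosed_partition
    {X : Type*} [TopologicalSpace X] {m : ℕ} (Y : Fin m → Set X)
    (hlc : ∀ i, IsLocallyClosed (Y i))
    (hcover : (⋃ i, Y i) = Set.univ)
    (hdisj : Pairwise (Function.onFun Disjoint Y))
    (hfin : (irreducibleComponents X).Finite)
    (C : Set X) (hC : C ∈ irreducibleComponents X) :
    ∃ (i : Fin m) (D : Set (Y i)), D ∈ irreducibleComponents (Y i) ∧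
      C = closure (Subtype.val '' D) ∧ C ⊆ closure (C ∩ Y i) := by
  have hCcl : IsClosed C := isClosed_of_mem_irreducibleComponents C hC
  have hCirr : IsIrreducible C := hC.1
  -- find `i` with `C ⊆ closure (C ∩ Y i)`
  obtain ⟨i, hCi⟩ : ∃ i, C ⊆ closure (C ∩ Y i) := by
    classical
    obtain ⟨z, hz, hsz⟩ := isIrreducible_iff_sUnion_isClosed.mp hCirr
      (Finset.univ.image fun i => closure (C ∩ Y i))
      (by
        intro z hz
        simp only [Finset.mem_image] at hz
        obtain ⟨i, -, rfl⟩ := hz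
        exact isClosed_closure)
      (by
        intro x hx
        have hxu : x ∈ ⋃ i, Y i := hcover ▸ Set.mem_univ x
        obtain ⟨i, hi⟩ := Set.mem_iUnion.mp hxu
        refine Set.mem_sUnion.mpr ⟨closure (C ∩ Y i), ?_, subset_closure ⟨hx, hi⟩⟩
        simp only [Finset.coe_image, Set.mem_image]
        exact ⟨i, by simp, rfl⟩)
    simp only [Finset.mem_image] at hz
    obtain ⟨i, -, rfl⟩ := hz
    exact ⟨i, hsz⟩
  -- `closure (C ∩ Y i) = C`
  have hclC : closure (C ∩ Y i) = C :=
    subset_antisymm (hCcl.closure_subset_iff.mpr Set.inter_subset_left) hCi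
  have hCYirr : IsIrreducible (C ∩ Y i) := isIrreducible_iff_closure.mp (by rw [hclC]; exact hCirr)
  -- the preimage in the subtype `Y i`
  set D₀ : Set (Y i) := (Subtype.val : Y i → X) ⁻¹' C with hD₀def
  have hD₀img : Subtype.val '' D₀ = C ∩ Y i := by
    rw [hD₀def, Subtype.image_preimage_coe, Set.inter_comm]
  have hD₀irr : IsIrreducible D₀ := by
    constructor
    · obtain ⟨x, hxC, hxY⟩ := hCYirr.1
      exact ⟨⟨x, hxY⟩, hxC⟩
    · exact isPreirreducible_preimage_val hCYirr.2
  -- take a maximal preirreducible set containing `D₀`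
  obtain ⟨D, hDpre, hD₀D, hDmax⟩ := exists_preirreducible D₀ hD₀irr.2
  have hDirr : IsIrreducible D := ⟨hD₀irr.1.mono hD₀D, hDpre⟩
  have hDmem : D ∈ irreducibleComponents (Y i) :=
    ⟨hDirr, fun u hu hDu => (hDmax u hu.2 hDu).le⟩
  -- the closure of the image of `D` is an irreducible closed set containing `C`
  have himg : IsIrreducible (Subtype.val '' D) := hDirr.image _ continuous_subtype_val.continuousOn
  have hCsub : C ⊆ closure (Subtype.val '' D) := by
    calc C = closure (C ∩ Y i) := hclC.symm
    _ = closure (Subtype.val '' D₀) := by rw [hD₀img]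
    _ ⊆ closure (Subtype.val '' D) := closure_mono (Set.image_mono hD₀D)
  have hCeq : C = closure (Subtype.val '' D) :=
    subset_antisymm hCsub (hC.2 himg.closure hCsub)
  exact ⟨i, D, hDmem, hCeq, hCi⟩
end

section
/- Let Q be a finite quiver with vertex set {1, …, n}, let a_{ij} denote the number of arrows from vertex i to vertex j, fix L ≥ 0, and let m = (m_0, …, m_L) be a sequence of vectors in ℕ^n. Consider 'skeleta': collections σ = σ_0 ⊔ σ_1 ⊔ … ⊔ σ_L where σ_l is a finite set of pairs (p, r) with p a path of length l in Q and r an index from a fixed multiset of starting vertices realizing m_0 (i.e., σ_0 consists of exactly m_{0,i} length-zero paths at vertex i for each i), such that σ is closed under passing to initial subpaths and, for every l and j, the number of pairs (p, r) ∈ σ_l with p ending at vertex j equals m_{l,j}. Then such a skeleton exists if and only if for every l with 0 ≤ l < L and every vertex j: ∑_{i=1}^{n} a_{ij}·m_{l,i} ≥ m_{l+1,j}. -/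
universe uv uq

/-- The collection of all paths of a quiver, bundled with their endpoints. -/
abbrev QPath (V : Type uv) [Quiver.{uq + 1} V] := Σ a b : V, Quiver.Path a b

/-- A skeleton compatible with the layer data `m = (m_0, …, m_L)`: a finite set of pairs
`(p, r)` where `p` is a path of length at most `L` starting at the vertex `e r` of the
`r`-th top element, closed under initial subpaths, such that for every `l ≤ L` and vertex
`j`, exactly `m l j` of its paths of length `l` end at `j`. -/
def IsSkeleton {V : Type uv} [Quiver.{uq + 1} V] (L : ℕ) (m : ℕ → V → ℕ) (t : ℕ)
    (e : Fin t → V) (σ : Set (QPath V × Fin t)) : Prop :=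
  σ.Finite ∧
  (∀ x ∈ σ, x.1.1 = e x.2 ∧ x.1.2.2.length ≤ L) ∧
  (∀ x ∈ σ, ∀ (b : V) (p' : Quiver.Path x.1.1 b) (p'' : Quiver.Path b x.1.2.1),
    x.1.2.2 = p'.comp p'' → (⟨⟨x.1.1, b, p'⟩, x.2⟩ : QPath V × Fin t) ∈ σ) ∧
  (∀ l ≤ L, ∀ j : V,
    {x ∈ σ | x.1.2.2.length = l ∧ x.1.2.1 = j}.ncard = m l j)

section Aux

attribute [local instance] Classical.propDecidable

variable {V : Type uv} [Quiver.{uq + 1} V] [Fintype V] [∀ a b : V, Fintype (a ⟶ b)]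

/-- One-arrow extensions of a bundled path, ending at `j`. -/
noncomputable def extF (t : ℕ) (x : QPath V × Fin t) (j : V) : Finset (QPath V × Fin t) :=
  Finset.univ.image fun α : x.1.2.1 ⟶ j => ((⟨x.1.1, j, x.1.2.2.cons α⟩ : QPath V), x.2)

lemma pair_cons_inj {t : ℕ} {x y : QPath V × Fin t} {j : V} {α : x.1.2.1 ⟶ j}
    {β : y.1.2.1 ⟶ j}
    (h : ((⟨x.1.1, j, x.1.2.2.cons α⟩ : QPath V), x.2)
        = ((⟨y.1.1, j, y.1.2.2.cons β⟩ : QPath V), y.2)) :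
    x = y ∧ HEq α β := by
  obtain ⟨⟨a, c, p⟩, r⟩ := x
  obtain ⟨⟨a', c', p'⟩, r'⟩ := y
  simp only [Prod.mk.injEq, Sigma.mk.inj_iff] at h
  obtain ⟨⟨rfl, h1⟩, rfl⟩ := h
  have h2 := eq_of_heq h1
  rw [Sigma.mk.inj_iff] at h2
  obtain ⟨-, h2⟩ := h2
  have h3 : p.cons α = p'.cons β := eq_of_heq h2
  obtain rfl := Quiver.Path.obj_eq_of_cons_eq_cons h3
  obtain rfl := eq_of_heq (Quiver.Path.heq_of_cons_eq_cons h3)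
  exact ⟨rfl, Quiver.Path.hom_heq_of_cons_eq_cons h3⟩

lemma mem_extF {t : ℕ} {x z : QPath V × Fin t} {j : V} :
    z ∈ extF t x j ↔
      ∃ α : x.1.2.1 ⟶ j, z = ((⟨x.1.1, j, x.1.2.2.cons α⟩ : QPath V), x.2) := by
  simp [extF, eq_comm]

lemma extF_card {t : ℕ} (x : QPath V × Fin t) (j : V) :
    (extF t x j).card = Fintype.card (x.1.2.1 ⟶ j) := by
  rw [extF, Finset.card_image_of_injective _ fun α β h => eq_of_heq (pair_cons_inj h).2,
    Finset.card_univ]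

lemma extF_disjoint {t : ℕ} {x y : QPath V × Fin t} (j : V) (hxy : x ≠ y) :
    Disjoint (extF t x j) (extF t y j) := by
  rw [Finset.disjoint_left]
  rintro z hz hz'
  rw [mem_extF] at hz hz'
  obtain ⟨α, rfl⟩ := hz
  obtain ⟨β, h⟩ := hz'
  exact hxy (pair_cons_inj h).1

lemma extF_shape {t : ℕ} {x z : QPath V × Fin t} {j : V} (hz : z ∈ extF t x j) :
    z.1.1 = x.1.1 ∧ z.1.2.1 = j ∧ z.1.2.2.length = x.1.2.2.length + 1 ∧ z.2 = x.2 := by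
  obtain ⟨α, rfl⟩ := mem_extF.1 hz
  exact ⟨rfl, rfl, rfl, rfl⟩

lemma card_biUnion_extF {t : ℕ} (A : Finset (QPath V × Fin t)) (j : V) :
    (A.biUnion fun x => extF t x j).card
      = ∑ i : V, Fintype.card (i ⟶ j) * (A.filter fun x => x.1.2.1 = i).card := by
  rw [Finset.card_biUnion fun x _ y _ h => extF_disjoint j h,
    ← Finset.sum_fiberwise_of_maps_to (g := fun x : QPath V × Fin t => x.1.2.1)
      (t := Finset.univ) (fun x _ => Finset.mem_univ _) (fun x => (extF t x j).card)]
  refine Finset.sum_congr rfl fun i _ => ?_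
  calc ∑ x ∈ A.filter fun x => x.1.2.1 = i, (extF t x j).card
      = ∑ _x ∈ A.filter fun x => x.1.2.1 = i, Fintype.card (i ⟶ j) :=
        Finset.sum_congr rfl fun x hx => by
          rw [extF_card, (Finset.mem_filter.1 hx).2]
    _ = _ := by rw [Finset.sum_const, smul_eq_mul, mul_comm]

/-- Choose some subset of `s` of cardinality `min s.card k`. -/
noncomputable def chooseSub {β : Type*} (s : Finset β) (k : ℕ) : Finset β :=
  (Finset.exists_subset_card_eq (s := s) (n := min s.card k) (min_le_left _ _)).choose

lemma chooseSub_spec {β : Type*} (s : Finset β) (k : ℕ) :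
    chooseSub s k ⊆ s ∧ (chooseSub s k).card = min s.card k :=
  (Finset.exists_subset_card_eq (s := s) (n := min s.card k) (min_le_left _ _)).choose_spec

/-- The layers of the skeleton, built greedily. -/
noncomputable def layersF (t : ℕ) (e : Fin t → V) (L : ℕ) (m : ℕ → V → ℕ) :
    ℕ → Finset (QPath V × Fin t)
  | 0 => Finset.univ.image fun r => ((⟨e r, e r, Quiver.Path.nil⟩ : QPath V), r)
  | l + 1 =>
    if l + 1 ≤ L then
      Finset.univ.biUnion fun j : V =>
        chooseSub ((layersF t e L m l).biUnion fun x => extF t x j) (m (l + 1) j)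
    else ∅

variable {t : ℕ} {e : Fin t → V} {L : ℕ} {m : ℕ → V → ℕ}

lemma layersF_shape : ∀ l, ∀ x ∈ layersF t e L m l, x.1.1 = e x.2 ∧ x.1.2.2.length = l := by
  intro l
  induction l with
  | zero =>
    intro x hx
    rw [layersF, Finset.mem_image] at hx
    obtain ⟨r, -, rfl⟩ := hx
    exact ⟨rfl, rfl⟩
  | succ l ih =>
    intro x hx
    rw [layersF] at hx
    split at hx
    · rw [Finset.mem_biUnion] at hx
      obtain ⟨j, -, hx⟩ := hx
      have hx' := (chooseSub_spec _ _).1 hx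
      rw [Finset.mem_biUnion] at hx'
      obtain ⟨y, hy, hz⟩ := hx'
      obtain ⟨h1, h2, h3, h4⟩ := extF_shape hz
      obtain ⟨g1, g2⟩ := ih y hy
      exact ⟨by rw [h1, g1, h4], by rw [h3, g2]⟩
    · simp at hx

lemma layersF_pred : ∀ l, ∀ x ∈ layersF t e L m (l + 1),
    ∃ (c : V) (q : Quiver.Path x.1.1 c) (α : c ⟶ x.1.2.1), x.1.2.2 = q.cons α ∧
      ((⟨x.1.1, c, q⟩ : QPath V), x.2) ∈ layersF t e L m l := by
  intro l x hx
  rw [layersF] at hx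
  split at hx
  · rw [Finset.mem_biUnion] at hx
    obtain ⟨j, -, hx⟩ := hx
    have hx' := (chooseSub_spec _ _).1 hx
    rw [Finset.mem_biUnion] at hx'
    obtain ⟨y, hy, hz⟩ := hx'
    obtain ⟨α, rfl⟩ := mem_extF.1 hz
    exact ⟨y.1.2.1, y.1.2.2, α, rfl, hy⟩
  · simp at hx

lemma layersF_closed : ∀ (a b d : V) (p' : Quiver.Path a b) (p'' : Quiver.Path b d)
    (r : Fin t) (l : ℕ),
    ((⟨a, d, p'.comp p''⟩ : QPath V), r) ∈ layersF t e L m l →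
    ((⟨a, b, p'⟩ : QPath V), r) ∈ layersF t e L m p'.length := by
  intro a b d p' p''
  induction p'' with
  | nil =>
    intro r l h
    have hs := (layersF_shape l _ h).2
    simp only [Quiver.Path.comp_nil] at h hs
    rwa [hs]
  | @cons c d q α ih =>
    intro r l h
    have hs := (layersF_shape l _ h).2
    obtain ⟨l', rfl⟩ : ∃ l', l = l' + 1 := by
      refine ⟨(p'.comp q).length, ?_⟩
      simpa using hs.symm
    obtain ⟨c₀, q₀, α₀, hdec, hmem⟩ := layersF_pred l' _ h
    have h3 : (p'.comp q).cons α = q₀.cons α₀ := hdec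
    obtain rfl := Quiver.Path.obj_eq_of_cons_eq_cons h3
    obtain rfl := eq_of_heq (Quiver.Path.heq_of_cons_eq_cons h3)
    exact ih r l' hmem

lemma layersF_count (he : ∀ j, (Finset.univ.filter fun r => e r = j).card = m 0 j)
    (H : ∀ l < L, ∀ j, m (l + 1) j ≤ ∑ i : V, Fintype.card (i ⟶ j) * m l i) :
    ∀ l ≤ L, ∀ j, ((layersF t e L m l).filter fun x => x.1.2.1 = j).card = m l j := by
  intro l
  induction l with
  | zero =>
    intro _ j
    rw [layersF, Finset.filter_image,
      Finset.card_image_of_injective _ fun r s h => congrArg Prod.snd h]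
    rw [← he j]
  | succ l ih =>
    intro hl j
    have hlL : l ≤ L := Nat.le_of_succ_le hl
    have hlt : l < L := hl
    rw [layersF, if_pos hl]
    have hcardExt : ∀ j' : V,
        (((layersF t e L m l).biUnion fun x => extF t x j')).card
          = ∑ i : V, Fintype.card (i ⟶ j') * m l i := by
      intro j'
      rw [card_biUnion_extF]
      exact Finset.sum_congr rfl fun i _ => by rw [ih hlL i]
    have hB : ∀ j' : V,
        (chooseSub ((layersF t e L m l).biUnion fun x => extF t x j') (m (l + 1) j')).card
          = m (l + 1) j' := by
      intro j'
      rw [(chooseSub_spec _ _).2, hcardExt, min_eq_right (H l hlt j')]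
    have hend : ∀ (j' : V) z,
        z ∈ chooseSub ((layersF t e L m l).biUnion fun x => extF t x j') (m (l + 1) j') →
          z.1.2.1 = j' := by
      intro j' z hz
      have hz' := (chooseSub_spec _ _).1 hz
      rw [Finset.mem_biUnion] at hz'
      obtain ⟨y, -, hz''⟩ := hz'
      exact (extF_shape hz'').2.1
    have hfil : ((Finset.univ.biUnion fun j' : V =>
          chooseSub ((layersF t e L m l).biUnion fun x => extF t x j') (m (l + 1) j')).filter
            fun x => x.1.2.1 = j)
        = chooseSub ((layersF t e L m l).biUnion fun x => extF t x j) (m (l + 1) j) := by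
      ext z
      simp only [Finset.mem_filter, Finset.mem_biUnion, Finset.mem_univ, true_and]
      constructor
      · rintro ⟨⟨j', hz⟩, hj⟩
        have := hend j' z hz
        rw [this] at hj
        rwa [← hj]
      · intro hz
        exact ⟨⟨j, hz⟩, hend j z hz⟩
    rw [hfil, hB]

end Aux

/-- A skeleton compatible with the layer data `(m_0, …, m_L)` exists (for some choice of
starting vertices realizing `m_0`) if and only if for all `l < L` and every vertex `j`,
`∑_i a_{ij} · m_{l,i} ≥ m_{l+1,j}`, where `a_{ij}` is the number of arrows `i ⟶ j`. -/
theorem exists_skeleton_iff {V : Type uv} [Quiver.{uq + 1} V] [Fintype V]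
    [∀ a b : V, Fintype (a ⟶ b)] (L : ℕ) (m : ℕ → V → ℕ) :
    (∃ (t : ℕ) (e : Fin t → V),
        (∀ j : V, {r : Fin t | e r = j}.ncard = m 0 j) ∧
        ∃ σ : Set (QPath V × Fin t), IsSkeleton L m t e σ) ↔
      ∀ l < L, ∀ j : V,
        m (l + 1) j ≤ ∑ i : V, Fintype.card (i ⟶ j) * m l i := by
  classical
  constructor
  · rintro ⟨t, e, he, σ, hfin, hshape, hclosed, hcount⟩ l hl j
    have hcard : ∀ l' ≤ L, ∀ j' : V,
        ((hfin.toFinset.filter fun x => x.1.2.2.length = l' ∧ x.1.2.1 = j')).card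
          = m l' j' := by
      intro l' hl' j'
      rw [← hcount l' hl' j', ← Set.ncard_coe_finset]
      congr 1
      ext x
      simp [Set.Finite.mem_toFinset]
    have hsub : (hfin.toFinset.filter fun x => x.1.2.2.length = l + 1 ∧ x.1.2.1 = j)
        ⊆ (hfin.toFinset.filter fun x => x.1.2.2.length = l).biUnion fun x => extF t x j := by
      intro x hx
      rw [Finset.mem_filter] at hx
      obtain ⟨hxF, hlen, hend⟩ := hx
      have hxσ : x ∈ σ := hfin.mem_toFinset.1 hxF
      obtain ⟨⟨a, c, p⟩, r⟩ := x
      subst hend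
      cases p with
      | nil => simp at hlen
      | @cons b c q α =>
        have hy : ((⟨a, b, q⟩ : QPath V), r) ∈ σ :=
          hclosed _ hxσ b q (Quiver.Path.nil.cons α) (by simp)
        rw [Finset.mem_biUnion]
        refine ⟨((⟨a, b, q⟩ : QPath V), r), ?_, ?_⟩
        · rw [Finset.mem_filter]
          exact ⟨hfin.mem_toFinset.2 hy, by simpa using hlen⟩
        · rw [mem_extF]
          exact ⟨α, rfl⟩
    calc m (l + 1) j = _ := (hcard (l + 1) hl j).symm
      _ ≤ ((hfin.toFinset.filter fun x => x.1.2.2.length = l).biUnion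
            fun x => extF t x j).card := Finset.card_le_card hsub
      _ = ∑ i : V, Fintype.card (i ⟶ j) *
            ((hfin.toFinset.filter fun x => x.1.2.2.length = l).filter
              fun x => x.1.2.1 = i).card := card_biUnion_extF _ j
      _ = ∑ i : V, Fintype.card (i ⟶ j) * m l i := by
          refine Finset.sum_congr rfl fun i _ => ?_
          rw [Finset.filter_filter, hcard l (le_of_lt hl) i]
  · intro H
    set t := ∑ i : V, m 0 i with ht
    have hcardsig : Fintype.card (Σ i : V, Fin (m 0 i)) = t := by
      simp [ht]
    let E : Fin t ≃ Σ i : V, Fin (m 0 i) := (Fintype.equivFinOfCardEq hcardsig).symm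
    let e : Fin t → V := fun r => (E r).1
    have hfibEquiv : ∀ j : V, { s : Σ i : V, Fin (m 0 i) // s.1 = j } ≃ Fin (m 0 j) := by
      intro j
      exact
        { toFun := fun s => s.prop ▸ s.val.2
          invFun := fun v => ⟨⟨j, v⟩, rfl⟩
          left_inv := by rintro ⟨⟨i, v⟩, rfl⟩; rfl
          right_inv := fun v => rfl }
    have heFin : ∀ j, (Finset.univ.filter fun r => e r = j).card = m 0 j := by
      intro j
      rw [← Fintype.card_subtype]
      rw [Fintype.card_congr ((E.subtypeEquiv fun r => Iff.rfl).trans (hfibEquiv j))]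
      exact Fintype.card_fin _
    have heSet : ∀ j : V, {r : Fin t | e r = j}.ncard = m 0 j := by
      intro j
      rw [Set.ncard_eq_toFinset_card', Set.toFinset_setOf]
      exact heFin j
    refine ⟨t, e, heSet, ↑((Finset.range (L + 1)).biUnion (layersF t e L m)), ?_, ?_, ?_, ?_⟩
    · exact Finset.finite_toSet _
    · intro x hx
      rw [Finset.mem_coe, Finset.mem_biUnion] at hx
      obtain ⟨l, hlm, hx⟩ := hx
      rw [Finset.mem_range] at hlm
      obtain ⟨h1, h2⟩ := layersF_shape l x hx
      exact ⟨h1, by rw [h2]; omega⟩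
    · rintro ⟨⟨a, d, p⟩, r⟩ hx b p' p'' hcomp
      rw [Finset.mem_coe, Finset.mem_biUnion] at hx
      obtain ⟨l, hlm, hx⟩ := hx
      rw [Finset.mem_range] at hlm
      dsimp only at hcomp
      rw [hcomp] at hx
      rw [Finset.mem_coe, Finset.mem_biUnion]
      have hlen := (layersF_shape l _ hx).2
      refine ⟨p'.length, ?_, layersF_closed a b d p' p'' r l hx⟩
      rw [Finset.mem_range]
      simp only [Quiver.Path.length_comp] at hlen
      omega
    · intro l hl j
      have hset : {x ∈ (↑((Finset.range (L + 1)).biUnion (layersF t e L m)) :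
            Set (QPath V × Fin t)) | x.1.2.2.length = l ∧ x.1.2.1 = j}
          = ↑((layersF t e L m l).filter fun x => x.1.2.1 = j) := by
        ext x
        simp only [Set.mem_setOf_eq, Finset.coe_filter, Finset.mem_coe, Finset.mem_biUnion,
          Finset.mem_range]
        constructor
        · rintro ⟨⟨l', hl', hx⟩, hlen, hend⟩
          have := (layersF_shape l' x hx).2
          rw [hlen] at this
          subst this
          exact ⟨hx, hend⟩
        · rintro ⟨hx, hend⟩
          exact ⟨⟨l, by omega, hx⟩, (layersF_shape l x hx).2, hend⟩
      rw [hset, Set.ncard_coe_finset]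
      exact layersF_count heFin H l hl j
end

section
/- Let Q be a finite quiver with arrow-count matrix (a_{ij}) and fix L ≥ 0. Let σ and σ̃ be two skeleta compatible with the same layer data m = (m_0, …, m_L) ∈ (ℕ^n)^{L+1} (i.e., for each l and j, both σ_l and σ̃_l contain exactly m_{l,j} paths of length l ending at vertex j, and both are closed under initial subpaths). For a skeleton σ, call a pair (α, (p,r)) with (p,r) ∈ σ, α an arrow composable with p, length(αp) ≤ L, and (αp, r) ∉ σ a σ-critical path, and let σ(αp) be the set of elements (q,s) ∈ σ with length(q) ≥ length(αp) and q ending at the same vertex as αp. Then ∑_{αp σ-critical} |σ(αp)| = ∑_{α̃p̃ σ̃-critical} |σ̃(α̃p̃)|; i.e., this number N(m) depends only on m and not on the choice of skeleton. -/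
universe uv uq

/-- The data of a would-be σ-critical path: an element `(p, r)` of the skeleton together
with an arrow `α : end(p) ⟶ j`. -/
abbrev CritDatum (V : Type uv) [Quiver.{uq + 1} V] (t : ℕ) :=
  Σ (x : QPath V × Fin t) (j : V), x.1.2.1 ⟶ j

/-- `c = ((p,r), j, α)` is σ-critical if `(p,r) ∈ σ`, `length (α p) ≤ L`, and the extended
path `(α p, r)` does not belong to `σ`. -/
def IsCritical {V : Type uv} [Quiver.{uq + 1} V] {t : ℕ} (L : ℕ)
    (σ : Set (QPath V × Fin t)) (c : CritDatum V t) : Prop :=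
  c.1 ∈ σ ∧ c.1.1.2.2.length + 1 ≤ L ∧
    (⟨⟨c.1.1.1, c.2.1, c.1.1.2.2.cons c.2.2⟩, c.1.2⟩ : QPath V × Fin t) ∉ σ

/-- `N(σ) = ∑_{αp σ-critical} |σ(αp)|`, counted as the number of pairs of a σ-critical
path `αp` and an element `(q,s) ∈ σ` with `length q ≥ length (αp)` ending at the same
vertex as `αp`. -/
noncomputable def Nval {V : Type uv} [Quiver.{uq + 1} V] {t : ℕ} (L : ℕ)
    (σ : Set (QPath V × Fin t)) : ℕ :=
  {z : CritDatum V t × (QPath V × Fin t) |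
    IsCritical L σ z.1 ∧ z.2 ∈ σ ∧ z.2.1.2.1 = z.1.2.1 ∧
      z.1.1.1.2.2.length + 1 ≤ z.2.1.2.2.length}.ncard

open scoped Classical

namespace NvalAux

variable {V : Type uv} [Quiver.{uq + 1} V] [Fintype V] [∀ a b : V, Fintype (a ⟶ b)] {t : ℕ}

/-- All critical data with base in `F`, base length `l`, arrow target `j`. -/
noncomputable def allF (F : Finset (QPath V × Fin t)) (l : ℕ) (j : V) :
    Finset (CritDatum V t) :=
  ((F.filter fun x => x.1.2.2.length = l).sigma fun x =>
      (Finset.univ : Finset (Σ j' : V, x.1.2.1 ⟶ j'))).filter fun c => c.2.1 = j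

lemma mem_allF {F : Finset (QPath V × Fin t)} {l : ℕ} {j : V} {c : CritDatum V t} :
    c ∈ allF F l j ↔ c.1 ∈ F ∧ c.1.1.2.2.length = l ∧ c.2.1 = j := by
  simp [allF, Finset.mem_sigma, Finset.mem_filter, and_assoc]

lemma card_filter_sigma_univ (i j : V) :
    ((Finset.univ : Finset (Σ j' : V, i ⟶ j')).filter fun y => y.1 = j).card
      = Fintype.card (i ⟶ j) := by
  rw [Finset.card_filter, ← Finset.univ_sigma_univ, Finset.sum_sigma]
  simp [Finset.sum_ite_eq, apply_ite Finset.card, Finset.card_univ]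

lemma nval_formula (L : ℕ) (m : ℕ → V → ℕ) (e : Fin t → V)
    (σ : Set (QPath V × Fin t)) (hσ : IsSkeleton L m t e σ) :
    Nval L σ = ∑ p ∈ Finset.range L ×ˢ (Finset.univ : Finset V),
      ((∑ i : V, Fintype.card (i ⟶ p.2) * m p.1 i) - m (p.1 + 1) p.2) *
        (∑ l' ∈ Finset.Icc (p.1 + 1) L, m l' p.2) := by
  obtain ⟨hfin, hbd, hcl, hct⟩ := hσ
  set F : Finset (QPath V × Fin t) := hfin.toFinset with hFdef
  have hF : ∀ x, x ∈ F ↔ x ∈ σ := fun x => hfin.mem_toFinset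
  -- layer counts
  have hlayer : ∀ l ≤ L, ∀ j : V,
      (F.filter fun x => x.1.2.2.length = l ∧ x.1.2.1 = j).card = m l j := by
    intro l hl j
    rw [← hct l hl j, ← Set.ncard_coe_finset]
    congr 1
    ext x
    simp only [Set.mem_setOf_eq, Finset.coe_filter, hF x]
  -- tail counts
  have htail : ∀ l : ℕ, ∀ j : V,
      (F.filter fun x => x.1.2.1 = j ∧ l + 1 ≤ x.1.2.2.length).card
        = ∑ l' ∈ Finset.Icc (l + 1) L, m l' j := by
    intro l j
    rw [Finset.card_eq_sum_card_fiberwise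
      (f := fun x => x.1.2.2.length) (t := Finset.Icc (l + 1) L)
      (fun x hx => by
        simp only [Finset.mem_coe, Finset.mem_filter] at hx
        exact Finset.mem_Icc.mpr ⟨hx.2.2, (hbd x ((hF x).mp hx.1)).2⟩)]
    refine Finset.sum_congr rfl fun l' hl' => ?_
    obtain ⟨h1, h2⟩ := Finset.mem_Icc.mp hl'
    rw [← hlayer l' h2 j]
    congr 1
    ext x
    simp only [Finset.mem_filter, Finset.filter_filter]
    constructor
    · rintro ⟨hx, ⟨hej, hle⟩, hlen⟩; exact ⟨hx, hlen, hej⟩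
    · rintro ⟨hx, hlen, hej⟩; exact ⟨hx, ⟨hej, by omega⟩, hlen⟩
  -- the count of all critical data
  have hall : ∀ l ≤ L, ∀ j : V,
      (allF F l j).card = ∑ i : V, Fintype.card (i ⟶ j) * m l i := by
    intro l hl j
    have : allF F l j = (F.filter fun x => x.1.2.2.length = l).sigma fun x =>
        (Finset.univ : Finset (Σ j' : V, x.1.2.1 ⟶ j')).filter fun y => y.1 = j := by
      ext c
      simp [mem_allF, Finset.mem_sigma, Finset.mem_filter, and_assoc]
    rw [this, Finset.card_sigma]
    have h2 : ∀ x ∈ F.filter fun x => x.1.2.2.length = l,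
        (((Finset.univ : Finset (Σ j' : V, x.1.2.1 ⟶ j')).filter fun y => y.1 = j)).card
          = Fintype.card (x.1.2.1 ⟶ j) := fun x _ => card_filter_sigma_univ _ _
    rw [Finset.sum_congr rfl h2]
    have hfw := Finset.sum_fiberwise_of_maps_to
      (g := fun x : QPath V × Fin t => x.1.2.1)
      (t := (Finset.univ : Finset V))
      (s := F.filter fun x => x.1.2.2.length = l)
      (fun x _ => Finset.mem_univ _)
      (fun x : QPath V × Fin t => Fintype.card (x.1.2.1 ⟶ j))
    rw [← hfw]
    refine Finset.sum_congr rfl fun i _ => ?_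
    have : ∀ x ∈ (F.filter fun x => x.1.2.2.length = l).filter fun x => x.1.2.1 = i,
        Fintype.card (x.1.2.1 ⟶ j) = Fintype.card (i ⟶ j) := by
      intro x hx
      simp only [Finset.mem_filter] at hx
      rw [hx.2]
    rw [Finset.sum_congr rfl this, Finset.sum_const, Finset.filter_filter,
      hlayer l hl i, smul_eq_mul, mul_comm]
  -- critical + extendable = all
  have hcrit : ∀ l : ℕ, l + 1 ≤ L → ∀ j : V,
      ((allF F l j).filter fun c =>
          (⟨⟨c.1.1.1, c.2.1, c.1.1.2.2.cons c.2.2⟩, c.1.2⟩ : QPath V × Fin t) ∉ σ).card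
        + m (l + 1) j = ∑ i : V, Fintype.card (i ⟶ j) * m l i := by
    intro l hl j
    have hin : ((allF F l j).filter fun c =>
        (⟨⟨c.1.1.1, c.2.1, c.1.1.2.2.cons c.2.2⟩, c.1.2⟩ : QPath V × Fin t) ∈ σ).card
          = m (l + 1) j := by
      rw [← hlayer (l + 1) hl j]
      refine Finset.card_bij (fun c _ =>
        (⟨⟨c.1.1.1, c.2.1, c.1.1.2.2.cons c.2.2⟩, c.1.2⟩ : QPath V × Fin t)) ?_ ?_ ?_
      · intro c hc
        simp only [Finset.mem_filter, mem_allF] at hc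
        obtain ⟨⟨h1, h2, h3⟩, h4⟩ := hc
        simp only [Finset.mem_filter]
        exact ⟨(hF _).mpr h4, by simp [Quiver.Path.length_cons, h2], h3⟩
      · rintro ⟨⟨⟨a, i0, p⟩, r⟩, j1, α⟩ hc ⟨⟨⟨a', i0', p'⟩, r'⟩, j1', α'⟩ hc' h
        simp only [Prod.mk.injEq] at h
        obtain ⟨h1, rfl⟩ := h
        obtain ⟨rfl, h2⟩ := Sigma.mk.inj_iff.mp h1
        obtain ⟨rfl, h3⟩ := Sigma.mk.inj_iff.mp (eq_of_heq h2)
        have h4 := eq_of_heq h3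
        obtain rfl := Quiver.Path.obj_eq_of_cons_eq_cons h4
        obtain rfl := eq_of_heq (Quiver.Path.heq_of_cons_eq_cons h4)
        obtain rfl := eq_of_heq (Quiver.Path.hom_heq_of_cons_eq_cons h4)
        rfl
      · rintro ⟨⟨a, b, p⟩, r⟩ hy
        simp only [Finset.mem_filter] at hy
        obtain ⟨hy1, hy2, rfl⟩ := hy
        cases p with
        | nil => simp at hy2
        | cons q α =>
          have hq : (⟨⟨a, _, q⟩, r⟩ : QPath V × Fin t) ∈ σ := by
            have := hcl _ ((hF _).mp hy1) _ q (Quiver.Path.nil.cons α) (by simp)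
            exact this
          have hlen : q.length = l := by
            simpa [Quiver.Path.length_cons] using hy2
          refine ⟨⟨⟨⟨a, _, q⟩, r⟩, _, α⟩, ?_, rfl⟩
          rw [Finset.mem_filter, mem_allF]
          exact ⟨⟨(hF _).mpr hq, hlen, rfl⟩, (hF _).mp hy1⟩
    rw [← hall l (by omega) j, ← hin, add_comm]
    have hpart := Finset.card_filter_add_card_filter_not
      (s := allF F l j) (p := fun c =>
        (⟨⟨c.1.1.1, c.2.1, c.1.1.2.2.cons c.2.2⟩, c.1.2⟩ : QPath V × Fin t) ∈ σ)
    convert hpart using 3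
  -- main decomposition
  have hSF : {z : CritDatum V t × (QPath V × Fin t) |
      IsCritical L σ z.1 ∧ z.2 ∈ σ ∧ z.2.1.2.1 = z.1.2.1 ∧
        z.1.1.1.2.2.length + 1 ≤ z.2.1.2.2.length}
      = ↑(((F.sigma fun x => (Finset.univ : Finset (Σ j' : V, x.1.2.1 ⟶ j'))) ×ˢ F).filter
          fun z => IsCritical L σ z.1 ∧ z.2.1.2.1 = z.1.2.1 ∧
            z.1.1.1.2.2.length + 1 ≤ z.2.1.2.2.length) := by
    ext z
    simp only [Set.mem_setOf_eq, Finset.coe_filter, Finset.mem_product, Finset.mem_sigma,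
      Finset.mem_univ, and_true, hF]
    constructor
    · rintro ⟨h1, h2, h3, h4⟩; exact ⟨⟨h1.1, h2⟩, h1, h3, h4⟩
    · rintro ⟨⟨ha, hb⟩, h1, h3, h4⟩; exact ⟨h1, hb, h3, h4⟩
  rw [Nval, hSF, Set.ncard_coe_finset]
  rw [Finset.card_eq_sum_card_fiberwise
    (f := fun z => (z.1.1.1.2.2.length, z.1.2.1))
    (t := Finset.range L ×ˢ (Finset.univ : Finset V))
    (fun z hz => by
      simp only [Finset.mem_coe, Finset.mem_filter] at hz
      have hL := hz.2.1.2.1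
      simp only [Finset.mem_coe, Finset.mem_product, Finset.mem_range, Finset.mem_univ, and_true]
      omega)]
  refine Finset.sum_congr rfl ?_
  rintro ⟨l, j⟩ hp
  simp only [Finset.mem_product, Finset.mem_range, Finset.mem_univ, and_true] at hp
  have hfib : ((((F.sigma fun x => (Finset.univ : Finset (Σ j' : V, x.1.2.1 ⟶ j'))) ×ˢ F).filter
        fun z => IsCritical L σ z.1 ∧ z.2.1.2.1 = z.1.2.1 ∧
          z.1.1.1.2.2.length + 1 ≤ z.2.1.2.2.length).filter
        fun z => (z.1.1.1.2.2.length, z.1.2.1) = (l, j))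
      = ((allF F l j).filter fun c =>
          (⟨⟨c.1.1.1, c.2.1, c.1.1.2.2.cons c.2.2⟩, c.1.2⟩ : QPath V × Fin t) ∉ σ)
        ×ˢ (F.filter fun x => x.1.2.1 = j ∧ l + 1 ≤ x.1.2.2.length) := by
    ext ⟨c, y⟩
    simp only [Finset.mem_filter, Finset.mem_product, Finset.mem_sigma, Finset.mem_univ,
      and_true, mem_allF, Prod.mk.injEq]
    simp only [IsCritical]
    constructor
    · rintro ⟨⟨⟨hcF, hyF⟩, ⟨hc1, hc2, hc3⟩, hey, hlen⟩, hl, hj⟩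
      exact ⟨⟨⟨hcF, hl, hj⟩, hc3⟩, hyF, by rw [hey, hj], by omega⟩
    · rintro ⟨⟨⟨hcF, hl, hj⟩, hc3⟩, hyF, hey, hlen⟩
      refine ⟨⟨⟨hcF, hyF⟩, ⟨(hF _).mp hcF, by omega, hc3⟩, by rw [hey, hj], by omega⟩, hl, hj⟩
  rw [hfib, Finset.card_product, htail l j]
  have h1 := hcrit l (by omega) j
  dsimp only
  congr 1
  omega

end NvalAux


/-- The number `N(m) = ∑_{αp σ-critical} |σ(αp)|` is the same for any two skeleta `σ`, `σ̃`
compatible with the same layer data `m`. -/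
theorem Nval_eq_of_isSkeleton {V : Type uv} [Quiver.{uq + 1} V] [Fintype V]
    [∀ a b : V, Fintype (a ⟶ b)] (L : ℕ) (m : ℕ → V → ℕ)
    {t t' : ℕ} (e : Fin t → V) (e' : Fin t' → V)
    (he : ∀ j : V, {r : Fin t | e r = j}.ncard = m 0 j)
    (he' : ∀ j : V, {r : Fin t' | e' r = j}.ncard = m 0 j)
    (σ : Set (QPath V × Fin t)) (σ' : Set (QPath V × Fin t'))
    (hσ : IsSkeleton L m t e σ) (hσ' : IsSkeleton L m t' e' σ') :
    Nval L σ = Nval L σ' := by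
  rw [NvalAux.nval_formula L m e σ hσ, NvalAux.nval_formula L m e' σ' hσ']
end
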